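/- For every integer b > 1 there exist a finite alphabet A and a stochastic matrix M on A with the following two properties: (1) for the broadcast process with channel M on the 2-level b-ary tree (a root, its b children, and the b² grandchildren, which are the leaves), for every initial distribution of the root value σ_ρ, the random variables σ_ρ and σ_∂ (the configuration at the b² leaves) are independent; (2) there exists an integer B such that the reconstruction problem for the infinite B-ary tree T_B and M is solvable. -/

import Mathlib

open Filter

/-- The distribution of the configuration at level `n` of the `b`-ary tree,
for the broadcast process with channel `M`, given that the root has value `i`.
Vertices at level `n` are encoded as paths `Fin n → Fin b`. -/
noncomputable def levelDist {A : Type} [Fintype A] [DecidableEq A]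
    (M : A → A → ℝ) (b : ℕ) (i : A) : (n : ℕ) → ((Fin n → Fin b) → A) → ℝ
  | 0 => fun σ => if σ = (fun _ => i) then 1 else 0
  | n + 1 => fun τ => ∑ σ : (Fin n → Fin b) → A, levelDist M b i n σ *
      ∏ w : Fin (n + 1) → Fin b, M (σ fun m => w m.castSucc) (τ w)

/-- Total variation distance between two (densities of) probability measures
on a finite set. -/
noncomputable def tvDist {Ω : Type*} [Fintype Ω] (P Q : Ω → ℝ) : ℝ :=
  (1 / 2) * ∑ σ, |P σ - Q σ|

open Finset

set_option linter.unusedSectionVars false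

lemma sum_func_prod {ι α : Type} [Fintype ι] [DecidableEq ι] [Fintype α]
    (u : ι → α → ℝ) : ∑ y : ι → α, ∏ m, u m (y m) = ∏ m, ∑ a, u m a := by
  rw [Finset.prod_univ_sum (fun _ => (univ : Finset α)) u]
  exact (Finset.sum_congr (by rw [Fintype.piFinset_univ]) fun _ _ => rfl).symm

section TD
variable {A : Type} [Fintype A] [DecidableEq A] (M : A → A → ℝ) {B : ℕ}

lemma levelDist_nonneg (hM : ∀ i j, 0 ≤ M i j) (b : ℕ) (i : A) (n : ℕ)
    (σ : (Fin n → Fin b) → A) : 0 ≤ levelDist M b i n σ := by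
  induction n with
  | zero => simp only [levelDist]; positivity
  | succ n ih =>
    simp only [levelDist]
    refine Finset.sum_nonneg fun τ _ => mul_nonneg (ih τ) ?_
    exact Finset.prod_nonneg fun w _ => hM _ _

lemma levelDist_sum_one (hM : ∀ i, ∑ j, M i j = 1) (b : ℕ) (i : A) (n : ℕ) :
    ∑ σ : (Fin n → Fin b) → A, levelDist M b i n σ = 1 := by
  induction n with
  | zero => simp [levelDist]
  | succ n ih =>
    simp only [levelDist]
    rw [Finset.sum_comm]
    have h1 : ∀ σ : (Fin n → Fin b) → A,
        ∑ τ : (Fin (n+1) → Fin b) → A,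
          levelDist M b i n σ * ∏ w, M (σ fun m => w m.castSucc) (τ w)
        = levelDist M b i n σ := by
      intro σ
      rw [← Finset.mul_sum]
      have h2 := sum_func_prod (fun (w : Fin (n+1) → Fin b) (a : A) => M (σ fun m => w m.castSucc) a)
      rw [h2]
      simp [hM]
    rw [Finset.sum_congr rfl fun σ _ => h1 σ, ih]

/-- the empty path -/
def d0 {B : ℕ} : Fin 0 → Fin B := fun z => z.elim0

lemma cons_comp_castSucc {n : ℕ} (m : Fin B) (w : Fin (n+1) → Fin B) :
    (fun j : Fin (n+1) => Fin.cons (α := fun _ => Fin B) m w j.castSucc) =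
      (Fin.cons m (fun j : Fin n => w j.castSucc) : Fin (n+1) → Fin B) := by
  funext j
  induction j using Fin.cases with
  | zero => simp
  | succ j =>
    have h1 : (Fin.castSucc j.succ) = (Fin.castSucc j).succ := by
      exact Fin.ext rfl
    rw [h1, Fin.cons_succ, Fin.cons_succ]

def pathEquiv (B n : ℕ) : (Fin (n+1) → Fin B) ≃ (Fin B × (Fin n → Fin B)) where
  toFun w := (w 0, Fin.tail w)
  invFun p := Fin.cons p.1 p.2
  left_inv w := Fin.cons_self_tail w
  right_inv p := by simp [Fin.tail_cons]

def cfgEquiv (A : Type) (B n : ℕ) :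
    ((Fin (n+1) → Fin B) → A) ≃ (Fin B → (Fin n → Fin B) → A) where
  toFun σ m w := σ (Fin.cons m w)
  invFun g w := g (w 0) (Fin.tail w)
  left_inv σ := by funext w; simp [Fin.cons_self_tail]
  right_inv g := by funext m w; simp [Fin.tail_cons]

lemma prod_path_split {n : ℕ} (f : (Fin (n+1) → Fin B) → ℝ) :
    ∏ w : Fin (n+1) → Fin B, f w
      = ∏ m : Fin B, ∏ w : Fin n → Fin B, f (Fin.cons m w) := by
  rw [← Fintype.prod_prod_type (fun p : Fin B × (Fin n → Fin B) => f (Fin.cons p.1 p.2))]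
  exact Fintype.prod_equiv (pathEquiv B n) f _
    (fun w => congrArg f (Fin.cons_self_tail w).symm)

omit [Fintype A] [DecidableEq A] in
lemma eq_const_iff {B : ℕ} (σ' : (Fin 0 → Fin B) → A) (x : A) :
    (σ' = fun _ => x) ↔ σ' d0 = x := by
  constructor
  · intro h; exact congrFun h d0
  · intro h; funext w
    rw [show w = d0 from funext fun z => z.elim0]; exact h

lemma topdown (n : ℕ) : ∀ (i : A) (τ : (Fin (n+1) → Fin B) → A),
    levelDist M B i (n+1) τ = ∑ c : Fin B → A, (∏ m, M i (c m)) *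
      ∏ m, levelDist M B (c m) n (fun w => τ (Fin.cons m w)) := by
  induction n with
  | zero =>
    intro i τ
    show (∑ σ : (Fin 0 → Fin B) → A, (if σ = fun _ => i then (1:ℝ) else 0) *
        ∏ w : Fin 1 → Fin B, M (σ fun m => w m.castSucc) (τ w)) = _
    rw [Finset.sum_eq_single (fun _ => i : (Fin 0 → Fin B) → A)
        (fun σ _ hσ => by rw [if_neg hσ, zero_mul])
        (fun h => absurd (mem_univ _) h)]
    rw [if_pos rfl, one_mul]
    have hR : ∀ c : Fin B → A, (∏ m, M i (c m)) *
        ∏ m, levelDist M B (c m) 0 (fun w => τ (Fin.cons m w))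
        = ∏ m, (M i (c m) * if τ (Fin.cons m d0) = c m then 1 else 0) := by
      intro c
      rw [← Finset.prod_mul_distrib]
      refine Finset.prod_congr rfl fun m _ => ?_
      congr 1
      show (if (fun w : Fin 0 → Fin B => τ (Fin.cons m w)) = fun _ => c m then (1:ℝ) else 0) = _
      by_cases h : τ (Fin.cons m d0) = c m
      · rw [if_pos ((eq_const_iff _ _).mpr h), if_pos h]
      · rw [if_neg (fun hh => h ((eq_const_iff _ _).mp hh)), if_neg h]
    rw [Finset.sum_congr rfl fun c _ => hR c,
      sum_func_prod (fun m a => M i a * if τ (Fin.cons m d0) = a then 1 else 0)]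
    have hcol : ∀ m : Fin B, (∑ a, M i a * if τ (Fin.cons m d0) = a then (1:ℝ) else 0)
        = M i (τ (Fin.cons m d0)) := by
      intro m
      rw [Finset.sum_eq_single (τ (Fin.cons m d0))
        (fun a _ ha => by rw [if_neg (fun hh => ha hh.symm), mul_zero])
        (fun h => absurd (mem_univ _) h), if_pos rfl, mul_one]
    rw [Finset.prod_congr rfl fun m _ => hcol m]
    exact Fintype.prod_equiv (Equiv.funUnique (Fin 1) (Fin B)) _ _
      (fun w => by
        show M i (τ w) = M i (τ (Fin.cons (w default) d0))
        congr 2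
        funext j
        rw [show j = (0 : Fin 1) from Subsingleton.elim _ _]
        rfl)
  | succ n ih =>
    intro i τ
    have lhs_eq : levelDist M B i (n+2) τ = ∑ σ : (Fin (n+1) → Fin B) → A,
        levelDist M B i (n+1) σ *
        ∏ w : Fin (n+2) → Fin B, M (σ fun m => w m.castSucc) (τ w) := rfl
    rw [lhs_eq]
    have split : ∀ σ : (Fin (n+1) → Fin B) → A,
        (∏ w : Fin (n+2) → Fin B, M (σ fun m => w m.castSucc) (τ w))
        = ∏ m, ∏ w' : Fin (n+1) → Fin B,
            M ((fun v => σ (Fin.cons m v)) (fun j => w' j.castSucc)) (τ (Fin.cons m w')) := by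
      intro σ
      rw [prod_path_split (fun w => M (σ fun m => w m.castSucc) (τ w))]
      refine Finset.prod_congr rfl fun m _ => Finset.prod_congr rfl fun w' _ => ?_
      congr 2
      exact cons_comp_castSucc m w'
    calc ∑ σ : (Fin (n+1) → Fin B) → A, levelDist M B i (n+1) σ *
          ∏ w : Fin (n+2) → Fin B, M (σ fun m => w m.castSucc) (τ w)
        = ∑ σ : (Fin (n+1) → Fin B) → A, ∑ c : Fin B → A,
            (∏ m, M i (c m)) * ∏ m, (levelDist M B (c m) n (fun v => σ (Fin.cons m v)) *
              ∏ w' : Fin (n+1) → Fin B,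
                M ((fun v => σ (Fin.cons m v)) (fun j => w' j.castSucc)) (τ (Fin.cons m w'))) := by
          refine Finset.sum_congr rfl fun σ _ => ?_
          rw [ih i σ, split σ, Finset.sum_mul]
          refine Finset.sum_congr rfl fun c _ => ?_
          rw [mul_assoc, ← Finset.prod_mul_distrib]
      _ = ∑ c : Fin B → A, (∏ m, M i (c m)) * ∑ σ : (Fin (n+1) → Fin B) → A,
            ∏ m, (levelDist M B (c m) n (fun v => σ (Fin.cons m v)) *
              ∏ w' : Fin (n+1) → Fin B,
                M ((fun v => σ (Fin.cons m v)) (fun j => w' j.castSucc)) (τ (Fin.cons m w'))) := by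
          rw [Finset.sum_comm]
          exact Finset.sum_congr rfl fun c _ => by rw [Finset.mul_sum]
      _ = ∑ c : Fin B → A, (∏ m, M i (c m)) *
            ∏ m, levelDist M B (c m) (n+1) (fun w => τ (Fin.cons m w)) := by
          refine Finset.sum_congr rfl fun c _ => ?_
          congr 1
          have reidx : ∑ σ : (Fin (n+1) → Fin B) → A,
              ∏ m, (levelDist M B (c m) n (fun v => σ (Fin.cons m v)) *
                ∏ w' : Fin (n+1) → Fin B,
                  M ((fun v => σ (Fin.cons m v)) (fun j => w' j.castSucc)) (τ (Fin.cons m w')))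
              = ∑ g : Fin B → ((Fin n → Fin B) → A),
              ∏ m, (levelDist M B (c m) n (g m) *
                ∏ w' : Fin (n+1) → Fin B,
                  M ((g m) (fun j => w' j.castSucc)) (τ (Fin.cons m w'))) :=
            Fintype.sum_equiv (cfgEquiv A B n) _ _ (fun σ => rfl)
          rw [reidx, sum_func_prod (fun m (σ' : (Fin n → Fin B) → A) =>
            levelDist M B (c m) n σ' *
              ∏ w' : Fin (n+1) → Fin B, M (σ' fun j => w' j.castSucc) (τ (Fin.cons m w')))]
          rfl
end TD

section Estimator
variable {A : Type} [Fintype A] [DecidableEq A] [Nonempty A]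

noncomputable def dEst (S : A → ℝ) (B : ℕ) (T : ℝ) : A :=
  (Finset.exists_min_image univ (fun a => |T - (B:ℝ)/2 * S a|) univ_nonempty).choose

lemma dEst_spec (S : A → ℝ) (B : ℕ) (T : ℝ) (a : A) :
    |T - (B:ℝ)/2 * S (dEst S B T)| ≤ |T - (B:ℝ)/2 * S a| := by
  have h := (Finset.exists_min_image univ (fun a => |T - (B:ℝ)/2 * S a|) univ_nonempty).choose_spec
  exact h.2 a (mem_univ a)

noncomputable def Yhat (χ S : A → ℝ) (B : ℕ) : (n : ℕ) → ((Fin n → Fin B) → A) → A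
  | 0 => fun σ => σ d0
  | n+1 => fun τ => dEst S B (∑ m, χ (Yhat χ S B n (fun w => τ (Fin.cons m w))))

noncomputable def Qm (M : A → A → ℝ) (χ S : A → ℝ) (B n : ℕ) (i a : A) : ℝ :=
  ∑ σ : (Fin n → Fin B) → A, levelDist M B i n σ * (if Yhat χ S B n σ = a then 1 else 0)

noncomputable def Rm (M : A → A → ℝ) (χ S : A → ℝ) (B n : ℕ) (i a : A) : ℝ :=
  ∑ c, M i c * Qm M χ S B n c a

lemma prod_ind_eq {B : ℕ} (y₀ y : Fin B → A) :
    (∏ m, if y₀ m = y m then (1:ℝ) else 0) = if y₀ = y then 1 else 0 := by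
  by_cases h : y₀ = y
  · rw [if_pos h]
    exact Finset.prod_eq_one fun m _ => by rw [if_pos (congrFun h m)]
  · rw [if_neg h]
    obtain ⟨m, hm⟩ := Function.ne_iff.mp h
    exact Finset.prod_eq_zero (mem_univ m) (by rw [if_neg hm])

lemma ind_collapse {B : ℕ} (z : Fin B → A) (F : (Fin B → A) → ℝ) :
    ∑ y : Fin B → A, (∏ m, if z m = y m then (1:ℝ) else 0) * F y = F z := by
  rw [Finset.sum_congr rfl fun y _ => by rw [prod_ind_eq, ite_mul, one_mul, zero_mul]]
  rw [Finset.sum_ite_eq univ z F]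
  simp

lemma Qm_zero (M : A → A → ℝ) (χ S : A → ℝ) (B : ℕ) (i a : A) :
    Qm M χ S B 0 i a = if i = a then 1 else 0 := by
  unfold Qm
  rw [Finset.sum_eq_single (fun _ => i : (Fin 0 → Fin B) → A)
    (fun σ _ hσ => by
      show (if σ = fun _ => i then (1:ℝ) else 0) * _ = 0
      rw [if_neg hσ, zero_mul])
    (fun h => absurd (mem_univ _) h)]
  show (if (fun _ => i) = (fun _ => i : (Fin 0 → Fin B) → A) then (1:ℝ) else 0) * _ = _
  rw [if_pos rfl, one_mul]
  rfl

lemma Qm_rec (M : A → A → ℝ) (χ S : A → ℝ) (B n : ℕ) (i a : A) :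
    Qm M χ S B (n+1) i a = ∑ y : Fin B → A, (∏ m, Rm M χ S B n i (y m)) *
      (if dEst S B (∑ m, χ (y m)) = a then 1 else 0) := by
  unfold Qm
  calc ∑ τ : (Fin (n+1) → Fin B) → A, levelDist M B i (n+1) τ *
        (if Yhat χ S B (n+1) τ = a then 1 else 0)
      = ∑ τ : (Fin (n+1) → Fin B) → A, ∑ c : Fin B → A,
          ((∏ m, M i (c m)) * ∏ m, levelDist M B (c m) n (fun w => τ (Fin.cons m w))) *
          (if Yhat χ S B (n+1) τ = a then 1 else 0) := by
        exact Finset.sum_congr rfl fun τ _ => by rw [topdown M n i τ, Finset.sum_mul]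
    _ = ∑ c : Fin B → A, ∑ g : Fin B → ((Fin n → Fin B) → A),
          ((∏ m, M i (c m)) * ∏ m, levelDist M B (c m) n (g m)) *
          (if dEst S B (∑ m, χ (Yhat χ S B n (g m))) = a then 1 else 0) := by
        rw [Finset.sum_comm]
        refine Finset.sum_congr rfl fun c _ => ?_
        exact Fintype.sum_equiv (cfgEquiv A B n) _ _ (fun τ => rfl)
    _ = ∑ c : Fin B → A, ∑ g : Fin B → ((Fin n → Fin B) → A),
          ((∏ m, M i (c m)) * ∏ m, levelDist M B (c m) n (g m)) *
          (∑ y : Fin B → A, (∏ m, if Yhat χ S B n (g m) = y m then (1:ℝ) else 0) *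
            (if dEst S B (∑ m, χ (y m)) = a then 1 else 0)) := by
        refine Finset.sum_congr rfl fun c _ => Finset.sum_congr rfl fun g _ => ?_
        rw [ind_collapse (fun m => Yhat χ S B n (g m))
          (fun y => if dEst S B (∑ m, χ (y m)) = a then (1:ℝ) else 0)]
    _ = ∑ c : Fin B → A, (∏ m, M i (c m)) * ∑ y : Fin B → A,
          (∑ g : Fin B → ((Fin n → Fin B) → A), ∏ m, (levelDist M B (c m) n (g m) *
            (if Yhat χ S B n (g m) = y m then (1:ℝ) else 0))) *
          (if dEst S B (∑ m, χ (y m)) = a then 1 else 0) := by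
        refine Finset.sum_congr rfl fun c _ => ?_
        rw [Finset.sum_congr rfl fun g (_ : g ∈ univ) => Finset.mul_sum univ _ _]
        rw [Finset.sum_comm, Finset.mul_sum]
        refine Finset.sum_congr rfl fun y _ => ?_
        rw [Finset.sum_congr rfl fun g (_ : g ∈ univ) => show
          ((∏ m, M i (c m)) * ∏ m, levelDist M B (c m) n (g m)) *
            ((∏ m, if Yhat χ S B n (g m) = y m then (1:ℝ) else 0) *
              (if dEst S B (∑ m, χ (y m)) = a then 1 else 0))
          = (∏ m, M i (c m)) * (((∏ m, levelDist M B (c m) n (g m)) *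
              (∏ m, if Yhat χ S B n (g m) = y m then (1:ℝ) else 0)) *
              (if dEst S B (∑ m, χ (y m)) = a then 1 else 0)) from by ring]
        rw [← Finset.mul_sum, ← Finset.sum_mul]
        congr 2
        refine Finset.sum_congr rfl fun g _ => ?_
        rw [← Finset.prod_mul_distrib]
    _ = ∑ c : Fin B → A, (∏ m, M i (c m)) * ∑ y : Fin B → A,
          (∏ m, Qm M χ S B n (c m) (y m)) *
          (if dEst S B (∑ m, χ (y m)) = a then 1 else 0) := by
        refine Finset.sum_congr rfl fun c _ => congrArg _ (Finset.sum_congr rfl fun y _ => ?_)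
        congr 1
        exact sum_func_prod (fun m (σ' : (Fin n → Fin B) → A) =>
          levelDist M B (c m) n σ' * (if Yhat χ S B n σ' = y m then (1:ℝ) else 0))
    _ = ∑ y : Fin B → A, (∑ c : Fin B → A, ∏ m, (M i (c m) * Qm M χ S B n (c m) (y m))) *
          (if dEst S B (∑ m, χ (y m)) = a then 1 else 0) := by
        rw [Finset.sum_congr rfl fun c (_ : c ∈ univ) => Finset.mul_sum univ _ _]
        rw [Finset.sum_comm]
        refine Finset.sum_congr rfl fun y _ => ?_
        rw [Finset.sum_mul]
        refine Finset.sum_congr rfl fun c _ => ?_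
        rw [← mul_assoc]
        congr 1
        rw [← Finset.prod_mul_distrib]
    _ = ∑ y : Fin B → A, (∏ m, Rm M χ S B n i (y m)) *
          (if dEst S B (∑ m, χ (y m)) = a then 1 else 0) := by
        refine Finset.sum_congr rfl fun y _ => ?_
        congr 1
        exact sum_func_prod (fun m (c : A) => M i c * Qm M χ S B n c (y m))

lemma Qm_nonneg (M : A → A → ℝ) (hMnn : ∀ i j, 0 ≤ M i j) (χ S : A → ℝ) (B n : ℕ) (i a : A) :
    0 ≤ Qm M χ S B n i a :=
  Finset.sum_nonneg fun σ _ => mul_nonneg (levelDist_nonneg M hMnn B i n σ) (by positivity)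

lemma Qm_sum (M : A → A → ℝ) (hMsum : ∀ i, ∑ j, M i j = 1) (χ S : A → ℝ) (B n : ℕ) (i : A) :
    ∑ a, Qm M χ S B n i a = 1 := by
  unfold Qm
  rw [Finset.sum_comm]
  rw [Finset.sum_congr rfl fun σ _ => by
    rw [← Finset.mul_sum, Finset.sum_ite_eq univ (Yhat χ S B n σ) (fun _ => (1:ℝ)),
      if_pos (mem_univ _), mul_one]]
  exact levelDist_sum_one M hMsum B i n

end Estimator

section Moments
variable {A : Type} [Fintype A] [DecidableEq A]

lemma pick_two {B : ℕ} (R g : A → ℝ) (m m' : Fin B) :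
    ∑ y : Fin B → A, (∏ k, R (y k)) * (g (y m) * g (y m'))
    = ∏ k, ∑ a, R a * ((if k = m then g a else 1) * (if k = m' then g a else 1)) := by
  rw [← sum_func_prod (fun k a => R a * ((if k = m then g a else 1) * (if k = m' then g a else 1)))]
  refine Finset.sum_congr rfl fun y _ => ?_
  have expand : ∀ k : Fin B, R (y k) * ((if k = m then g (y k) else 1) *
      (if k = m' then g (y k) else 1))
      = R (y k) * ((if k = m then g (y k) else 1) * (if k = m' then g (y k) else 1)) := fun _ => rfl
  rw [show (∏ k, R (y k) * ((if k = m then g (y k) else 1) * (if k = m' then g (y k) else 1)))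
      = (∏ k, R (y k)) * ((∏ k, if k = m then g (y k) else 1) *
        (∏ k, if k = m' then g (y k) else 1)) from by
    rw [← Finset.prod_mul_distrib, ← Finset.prod_mul_distrib]]
  rw [Finset.prod_ite_eq' univ m (fun k => g (y k)), Finset.prod_ite_eq' univ m' (fun k => g (y k))]
  rw [if_pos (mem_univ m), if_pos (mem_univ m')]

lemma cross_term {B : ℕ} (R g : A → ℝ) (hg0 : ∑ a, R a * g a = 0)
    (m m' : Fin B) (hne : m ≠ m') :
    ∑ y : Fin B → A, (∏ k, R (y k)) * (g (y m) * g (y m')) = 0 := by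
  rw [pick_two]
  refine Finset.prod_eq_zero (mem_univ m) ?_
  rw [Finset.sum_congr rfl fun a _ => by
    rw [if_pos rfl, if_neg hne, mul_one]]
  exact hg0

lemma diag_term {B : ℕ} (R g : A → ℝ) (hR1 : ∑ a, R a = 1) (m : Fin B) :
    ∑ y : Fin B → A, (∏ k, R (y k)) * (g (y m) * g (y m))
    = ∑ a, R a * g a ^ 2 := by
  rw [pick_two]
  have hk : ∀ k : Fin B, (∑ a, R a * ((if k = m then g a else 1) * (if k = m then g a else 1)))
      = if k = m then ∑ a, R a * g a ^ 2 else 1 := by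
    intro k
    by_cases h : k = m
    · rw [if_pos h]
      exact Finset.sum_congr rfl fun a _ => by rw [if_pos h, sq]
    · rw [if_neg h]
      rw [Finset.sum_congr rfl fun a _ => by rw [if_neg h, mul_one, mul_one]]
      exact hR1
  rw [Finset.prod_congr rfl fun k _ => hk k, Finset.prod_ite_eq' univ m
    (fun _ => ∑ a, R a * g a ^ 2), if_pos (mem_univ m)]

lemma moment2 {B : ℕ} (R g : A → ℝ) (hR1 : ∑ a, R a = 1) (hg0 : ∑ a, R a * g a = 0) :
    ∑ y : Fin B → A, (∏ k, R (y k)) * (∑ m, g (y m)) ^ 2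
    = B * ∑ a, R a * g a ^ 2 := by
  have hsq : ∀ y : Fin B → A, (∑ m, g (y m)) ^ 2 = ∑ m, ∑ m', g (y m) * g (y m') := by
    intro y
    rw [sq, Finset.sum_mul_sum]
  rw [Finset.sum_congr rfl fun y _ => by rw [hsq y, Finset.mul_sum,
    Finset.sum_congr rfl fun m (_ : m ∈ univ) => Finset.mul_sum univ _ _]]
  rw [Finset.sum_comm]
  rw [Finset.sum_congr rfl fun m (_ : m ∈ univ) => Finset.sum_comm]
  have hterm : ∀ m m' : Fin B, (∑ y : Fin B → A, (∏ k, R (y k)) * (g (y m) * g (y m')))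
      = if m = m' then ∑ a, R a * g a ^ 2 else 0 := by
    intro m m'
    by_cases h : m = m'
    · rw [if_pos h, h]
      exact diag_term R g hR1 m'
    · rw [if_neg h]
      exact cross_term R g hg0 m m' h
  rw [Finset.sum_congr rfl fun m (_ : m ∈ univ) => Finset.sum_congr rfl fun m' (_ : m' ∈ univ) =>
    hterm m m']
  rw [Finset.sum_congr rfl fun m (_ : m ∈ univ) => Finset.sum_ite_eq univ m
    (fun _ => ∑ a, R a * g a ^ 2)]
  rw [Finset.sum_congr rfl fun m (_ : m ∈ univ) => if_pos (mem_univ m)]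
  rw [Finset.sum_const, Finset.card_univ, Fintype.card_fin, nsmul_eq_mul]

end Moments

section Invariant
variable {A : Type} [Fintype A] [DecidableEq A] [Nonempty A]

theorem invariant (M : A → A → ℝ) (χ S : A → ℝ) (N : ℕ) (hN : 3 ≤ N)
    (hMnn : ∀ i j, 0 ≤ M i j) (hMsum : ∀ i, ∑ j, M i j = 1)
    (hχ1 : ∀ a, χ a = 1 ∨ χ a = -1)
    (hmean : ∀ i, ∑ a, M i a * χ a = S i / 2)
    (hdet : ∀ a c, S a = S c → χ a = χ c)
    (hgap : ∀ a c, S a ≠ S c → 2 / (N:ℝ) ≤ |S a - S c|) :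
    ∀ n (i : A), 1 - 1/(16*(N:ℝ)) ≤
      ∑ a, Qm M χ S (1024 * N^3) n i a * (if S a = S i then 1 else 0) := by
  have hNr : (3:ℝ) ≤ (N:ℝ) := by exact_mod_cast hN
  have hNpos : (0:ℝ) < (N:ℝ) := by linarith
  set B : ℕ := 1024 * N^3 with hBdef
  have hBr : (B:ℝ) = 1024 * (N:ℝ)^3 := by push_cast [hBdef]; ring
  have hBpos : (0:ℝ) < (B:ℝ) := by rw [hBr]; positivity
  set ζ : ℝ := 1/(16*(N:ℝ)) with hζdef
  have hζpos : 0 < ζ := by rw [hζdef]; positivity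
  have hχbd : ∀ a, |χ a| ≤ 1 := by
    intro a
    rcases hχ1 a with h | h <;> rw [h] <;> simp
  intro n
  induction n with
  | zero =>
    intro i
    have : ∑ a, Qm M χ S B 0 i a * (if S a = S i then 1 else 0) = 1 := by
      rw [Finset.sum_congr rfl fun a _ => by rw [Qm_zero]]
      rw [Finset.sum_eq_single i
        (fun a _ ha => by rw [if_neg (fun hh => ha hh.symm), zero_mul])
        (fun h => absurd (mem_univ _) h)]
      rw [if_pos rfl, if_pos rfl, one_mul]
    rw [this]
    linarith
  | succ n IH =>
    intro i
    set R : A → ℝ := fun a => Rm M χ S B n i a with hRdef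
    have hRnn : ∀ a, 0 ≤ R a := fun a =>
      Finset.sum_nonneg fun c _ => mul_nonneg (hMnn i c) (Qm_nonneg M hMnn χ S B n c a)
    have hR1 : ∑ a, R a = 1 := by
      rw [hRdef]
      show (∑ a, ∑ c, M i c * Qm M χ S B n c a) = 1
      rw [Finset.sum_comm]
      rw [Finset.sum_congr rfl fun c _ => by
        rw [← Finset.mul_sum, Qm_sum M hMsum χ S B n c, mul_one]]
      exact hMsum i
    set μ : ℝ := ∑ a, R a * χ a with hμdef
    have hμbd : |μ| ≤ 1 := by
      rw [hμdef]
      calc |∑ a, R a * χ a| ≤ ∑ a, |R a * χ a| := Finset.abs_sum_le_sum_abs _ _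
        _ ≤ ∑ a, R a := Finset.sum_le_sum fun a _ => by
            rw [abs_mul, abs_of_nonneg (hRnn a)]
            calc R a * |χ a| ≤ R a * 1 := mul_le_mul_of_nonneg_left (hχbd a) (hRnn a)
              _ = R a := mul_one _
        _ = 1 := hR1
    -- inner estimate per c
    have hinner : ∀ c, |(∑ a, Qm M χ S B n c a * χ a) - χ c| ≤ 2*ζ := by
      intro c
      have hq1 := Qm_sum M hMsum χ S B n c
      have hqnn : ∀ a, 0 ≤ Qm M χ S B n c a := fun a => Qm_nonneg M hMnn χ S B n c a
      have heq : (∑ a, Qm M χ S B n c a * χ a) - χ c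
          = ∑ a, Qm M χ S B n c a * (χ a - χ c) := by
        rw [Finset.sum_congr rfl fun a (_ : a ∈ univ) => mul_sub (Qm M χ S B n c a) (χ a) (χ c)]
        rw [Finset.sum_sub_distrib, ← Finset.sum_mul, hq1, one_mul]
      rw [heq]
      calc |∑ a, Qm M χ S B n c a * (χ a - χ c)|
          ≤ ∑ a, |Qm M χ S B n c a * (χ a - χ c)| := Finset.abs_sum_le_sum_abs _ _
        _ ≤ ∑ a, Qm M χ S B n c a * (2 * (1 - (if S a = S c then 1 else 0))) := by
            refine Finset.sum_le_sum fun a _ => ?_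
            rw [abs_mul, abs_of_nonneg (hqnn a)]
            refine mul_le_mul_of_nonneg_left ?_ (hqnn a)
            by_cases h : S a = S c
            · rw [if_pos h, hdet a c h]
              simp
            · rw [if_neg h]
              calc |χ a - χ c| ≤ |χ a| + |χ c| := abs_sub _ _
                _ ≤ 1 + 1 := add_le_add (hχbd a) (hχbd c)
                _ = 2 * (1 - 0) := by ring
        _ = 2 * (1 - ∑ a, Qm M χ S B n c a * (if S a = S c then 1 else 0)) := by
            rw [Finset.sum_congr rfl fun a (_ : a ∈ univ) => show
              Qm M χ S B n c a * (2 * (1 - (if S a = S c then 1 else 0)))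
              = 2 * (Qm M χ S B n c a - Qm M χ S B n c a * (if S a = S c then 1 else 0))
              from by ring]
            rw [← Finset.mul_sum, Finset.sum_sub_distrib, hq1]
        _ ≤ 2 * (1 - (1 - ζ)) := by
            have := IH c
            nlinarith
        _ = 2*ζ := by ring
    have hμSi : |μ - S i / 2| ≤ 2*ζ := by
      have hswap : μ = ∑ c, M i c * (∑ a, Qm M χ S B n c a * χ a) := by
        rw [hμdef]
        show (∑ a, (∑ c, M i c * Qm M χ S B n c a) * χ a) = _
        rw [Finset.sum_congr rfl fun a (_ : a ∈ univ) => Finset.sum_mul univ _ (χ a)]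
        rw [Finset.sum_comm]
        refine Finset.sum_congr rfl fun c _ => ?_
        rw [Finset.mul_sum]
        exact Finset.sum_congr rfl fun a _ => by ring
      have heq : μ - S i / 2 = ∑ c, M i c * ((∑ a, Qm M χ S B n c a * χ a) - χ c) := by
        rw [Finset.sum_congr rfl fun c (_ : c ∈ univ) =>
          mul_sub (M i c) (∑ a, Qm M χ S B n c a * χ a) (χ c)]
        rw [Finset.sum_sub_distrib, ← hswap, hmean i]
      rw [heq]
      calc |∑ c, M i c * ((∑ a, Qm M χ S B n c a * χ a) - χ c)|
          ≤ ∑ c, |M i c * ((∑ a, Qm M χ S B n c a * χ a) - χ c)| :=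
            Finset.abs_sum_le_sum_abs _ _
        _ ≤ ∑ c, M i c * (2*ζ) := by
            refine Finset.sum_le_sum fun c _ => ?_
            rw [abs_mul, abs_of_nonneg (hMnn i c)]
            exact mul_le_mul_of_nonneg_left (hinner c) (hMnn i c)
        _ = 2*ζ := by rw [← Finset.sum_mul, hMsum i, one_mul]
    -- the statistic and concentration
    set g : A → ℝ := fun a => χ a - μ with hgdef
    have hg0 : ∑ a, R a * g a = 0 := by
      rw [hgdef]
      rw [Finset.sum_congr rfl fun a (_ : a ∈ univ) => mul_sub (R a) (χ a) μ]
      rw [Finset.sum_sub_distrib, ← hμdef, ← Finset.sum_mul, hR1, one_mul, sub_self]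
    have hgbd : ∀ a, g a ^ 2 ≤ 4 := by
      intro a
      have h1 : |g a| ≤ 2 := by
        rw [hgdef]
        calc |χ a - μ| ≤ |χ a| + |μ| := abs_sub _ _
          _ ≤ 1 + 1 := add_le_add (hχbd a) hμbd
          _ = 2 := by norm_num
      calc g a ^ 2 = |g a| ^ 2 := (sq_abs _).symm
        _ ≤ 2 ^ 2 := by nlinarith [abs_nonneg (g a)]
        _ = 4 := by norm_num
    have hV : ∑ y : Fin B → A, (∏ k, R (y k)) * (∑ m, g (y m)) ^ 2 ≤ 4 * B := by
      rw [moment2 R g hR1 hg0]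
      have : ∑ a, R a * g a ^ 2 ≤ ∑ a, R a * 4 :=
        Finset.sum_le_sum fun a _ => mul_le_mul_of_nonneg_left (hgbd a) (hRnn a)
      rw [← Finset.sum_mul, hR1, one_mul] at this
      calc (B:ℝ) * ∑ a, R a * g a ^ 2 ≤ (B:ℝ) * 4 :=
            mul_le_mul_of_nonneg_left this (le_of_lt hBpos)
        _ = 4 * B := by ring
    -- T y - B μ = ∑ g
    have hTshift : ∀ y : Fin B → A, (∑ m, g (y m)) = (∑ m, χ (y m)) - (B:ℝ) * μ := by
      intro y
      rw [hgdef]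
      rw [Finset.sum_sub_distrib, Finset.sum_const, Finset.card_univ, Fintype.card_fin,
        nsmul_eq_mul]
    set Bad : Finset (Fin B → A) :=
      univ.filter (fun y => ¬ |(∑ m, χ (y m)) - (B:ℝ)/2 * S i| < (B:ℝ)/(2*(N:ℝ))) with hBadDef
    have hBadLB : ∀ y ∈ Bad, 3*(B:ℝ)/(8*(N:ℝ)) ≤ |∑ m, g (y m)| := by
      intro y hy
      rw [hBadDef, Finset.mem_filter] at hy
      have h1 : (B:ℝ)/(2*(N:ℝ)) ≤ |(∑ m, χ (y m)) - (B:ℝ)/2 * S i| := not_lt.mp hy.2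
      rw [hTshift y]
      have h2 : |(B:ℝ) * μ - (B:ℝ)/2 * S i| ≤ (B:ℝ) * (2*ζ) := by
        have : (B:ℝ) * μ - (B:ℝ)/2 * S i = (B:ℝ) * (μ - S i / 2) := by ring
        rw [this, abs_mul, abs_of_nonneg (le_of_lt hBpos)]
        exact mul_le_mul_of_nonneg_left hμSi (le_of_lt hBpos)
      have h3 : |(∑ m, χ (y m)) - (B:ℝ) * μ| ≥
          |(∑ m, χ (y m)) - (B:ℝ)/2 * S i| - |(B:ℝ) * μ - (B:ℝ)/2 * S i| := by
        have := abs_sub_abs_le_abs_sub ((∑ m, χ (y m)) - (B:ℝ)/2 * S i)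
          ((B:ℝ) * μ - (B:ℝ)/2 * S i)
        have heq : ((∑ m, χ (y m)) - (B:ℝ)/2 * S i) - ((B:ℝ) * μ - (B:ℝ)/2 * S i)
            = (∑ m, χ (y m)) - (B:ℝ) * μ := by ring
        rw [heq] at this
        linarith
      have h4 : (B:ℝ) * (2*ζ) = (B:ℝ)/(8*(N:ℝ)) := by
        rw [hζdef]
        field_simp
        ring
      have h5 : (B:ℝ)/(2*(N:ℝ)) - (B:ℝ)/(8*(N:ℝ)) = 3*(B:ℝ)/(8*(N:ℝ)) := by
        field_simp
        ring
      linarith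
    -- Chebyshev
    have hPnn : ∀ y : Fin B → A, 0 ≤ ∏ k, R (y k) :=
      fun y => Finset.prod_nonneg fun k _ => hRnn _
    have hcheb : ∑ y ∈ Bad, ∏ k, R (y k) ≤ ζ := by
      set θ : ℝ := 3*(B:ℝ)/(8*(N:ℝ)) with hθdef
      have hθpos : 0 < θ := by rw [hθdef]; positivity
      have hθsq : 0 < θ^2 := by positivity
      have s1 : ∑ y ∈ Bad, ∏ k, R (y k)
          ≤ ∑ y ∈ Bad, ((∏ k, R (y k)) * (∑ m, g (y m))^2) / θ^2 := by
        refine Finset.sum_le_sum fun y hy => ?_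
        rw [le_div_iff₀ hθsq]
        have h1 := hBadLB y hy
        have h2 : θ^2 ≤ (∑ m, g (y m))^2 := by
          have h2' := sq_le_sq' (by linarith [abs_nonneg (∑ m, g (y m))] :
            -(|∑ m, g (y m)|) ≤ θ) (h1 : θ ≤ |∑ m, g (y m)|)
          rw [sq_abs] at h2'
          linarith
        exact mul_le_mul_of_nonneg_left h2 (hPnn y)
      have s2 : ∑ y ∈ Bad, ((∏ k, R (y k)) * (∑ m, g (y m))^2) / θ^2
          = (∑ y ∈ Bad, (∏ k, R (y k)) * (∑ m, g (y m))^2) / θ^2 :=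
        (Finset.sum_div _ _ _).symm
      have s3 : (∑ y ∈ Bad, (∏ k, R (y k)) * (∑ m, g (y m))^2)
          ≤ ∑ y : Fin B → A, (∏ k, R (y k)) * (∑ m, g (y m))^2 :=
        Finset.sum_le_sum_of_subset_of_nonneg (Finset.subset_univ Bad)
          (fun y _ _ => mul_nonneg (hPnn y) (sq_nonneg _))
      have s5 : 4*(B:ℝ)/θ^2 ≤ ζ := by
        have hθval : θ = 384*(N:ℝ)^2 := by
          rw [hθdef, hBr]
          field_simp
          ring
        rw [hθval, hBr, hζdef]
        rw [div_le_div_iff₀ (by positivity) (by positivity)]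
        have h4 : (0:ℝ) < (N:ℝ)^4 := by positivity
        nlinarith [h4]
      calc ∑ y ∈ Bad, ∏ k, R (y k)
          ≤ ∑ y ∈ Bad, ((∏ k, R (y k)) * (∑ m, g (y m))^2) / θ^2 := s1
        _ = (∑ y ∈ Bad, (∏ k, R (y k)) * (∑ m, g (y m))^2) / θ^2 := s2
        _ ≤ (∑ y : Fin B → A, (∏ k, R (y k)) * (∑ m, g (y m))^2) / θ^2 :=
            (div_le_div_iff_of_pos_right hθsq).mpr s3
        _ ≤ (4*(B:ℝ)) / θ^2 := by
            exact (div_le_div_iff_of_pos_right hθsq).mpr hV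
        _ ≤ ζ := by
            rw [show (4*(B:ℝ))/θ^2 = 4*(B:ℝ)/θ^2 from by ring]
            exact s5
    -- correctness of the estimator outside the bad set
    have hGood : ∀ y : Fin B → A, y ∉ Bad →
        S (dEst S B (∑ m, χ (y m))) = S i := by
      intro y hy
      rw [hBadDef, Finset.mem_filter, not_and] at hy
      have h1 : |(∑ m, χ (y m)) - (B:ℝ)/2 * S i| < (B:ℝ)/(2*(N:ℝ)) :=
        not_not.mp (hy (mem_univ y))
      have h2 := dEst_spec S (1024 * N^3) (∑ m, χ (y m)) i
      rw [show ((1024 * N^3 : ℕ) : ℝ) = (B:ℝ) from by rw [hBdef]] at h2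
      by_contra hne
      have h3 := hgap _ _ hne
      have h4 : (B:ℝ)/(N:ℝ) ≤ (B:ℝ)/2 *
          |S (dEst S B (∑ m, χ (y m))) - S i| := by
        calc (B:ℝ)/(N:ℝ) = (B:ℝ)/2 * (2/(N:ℝ)) := by field_simp
          _ ≤ (B:ℝ)/2 * |S (dEst S B (∑ m, χ (y m))) - S i| :=
            mul_le_mul_of_nonneg_left h3 (by positivity)
      have h5 : (B:ℝ)/2 * |S (dEst S B (∑ m, χ (y m))) - S i|
          = |(B:ℝ)/2 * S (dEst S B (∑ m, χ (y m))) - (B:ℝ)/2 * S i| := by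
        rw [← mul_sub, abs_mul, abs_of_nonneg (by positivity : (0:ℝ) ≤ (B:ℝ)/2)]
      have h6 : |(B:ℝ)/2 * S (dEst S B (∑ m, χ (y m))) - (B:ℝ)/2 * S i|
          ≤ |(∑ m, χ (y m)) - (B:ℝ)/2 * S (dEst S B (∑ m, χ (y m)))|
            + |(∑ m, χ (y m)) - (B:ℝ)/2 * S i| := by
        have := abs_sub ((∑ m, χ (y m)) - (B:ℝ)/2 * S i)
          ((∑ m, χ (y m)) - (B:ℝ)/2 * S (dEst S B (∑ m, χ (y m))))
        calc |(B:ℝ)/2 * S (dEst S B (∑ m, χ (y m))) - (B:ℝ)/2 * S i|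
            = |((∑ m, χ (y m)) - (B:ℝ)/2 * S i) -
              ((∑ m, χ (y m)) - (B:ℝ)/2 * S (dEst S B (∑ m, χ (y m))))| := by
              congr 1
              ring
          _ ≤ |(∑ m, χ (y m)) - (B:ℝ)/2 * S i| +
              |(∑ m, χ (y m)) - (B:ℝ)/2 * S (dEst S B (∑ m, χ (y m)))| := abs_sub _ _
          _ = _ := by ring
      have h7 : (B:ℝ)/(2*(N:ℝ)) + (B:ℝ)/(2*(N:ℝ)) = (B:ℝ)/(N:ℝ) := by
        field_simp
        ring
      linarith
    -- final assembly
    have hexp : ∑ a, Qm M χ S B (n+1) i a * (if S a = S i then 1 else 0)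
        = ∑ y : Fin B → A, (∏ m, R (y m)) *
          (if S (dEst S B (∑ m, χ (y m))) = S i then 1 else 0) := by
      rw [Finset.sum_congr rfl fun a (_ : a ∈ univ) => by
        rw [Qm_rec M χ S B n i a, Finset.sum_mul]]
      rw [Finset.sum_comm]
      refine Finset.sum_congr rfl fun y _ => ?_
      rw [Finset.sum_eq_single (dEst S B (∑ m, χ (y m)))
        (fun a _ ha => by rw [if_neg (fun hh => ha hh.symm), mul_zero, zero_mul])
        (fun h => absurd (mem_univ _) h)]
      rw [if_pos rfl, mul_one]
    have hPsum : ∑ y : Fin B → A, ∏ m, R (y m) = 1 := by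
      rw [sum_func_prod (fun _ a => R a)]
      rw [Finset.prod_congr rfl fun m _ => hR1]
      exact Finset.prod_const_one
    rw [hexp]
    have hsplit := Finset.sum_filter_add_sum_filter_not univ
      (fun y : Fin B → A => ¬ |(∑ m, χ (y m)) - (B:ℝ)/2 * S i| < (B:ℝ)/(2*(N:ℝ)))
      (fun y => (∏ m, R (y m)) * (if S (dEst S B (∑ m, χ (y m))) = S i then 1 else 0))
    have hBadPart : ∑ y ∈ Bad, (∏ m, R (y m)) *
        (if S (dEst S B (∑ m, χ (y m))) = S i then 1 else 0) ≤ ζ := by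
      calc ∑ y ∈ Bad, (∏ m, R (y m)) *
            (if S (dEst S B (∑ m, χ (y m))) = S i then 1 else 0)
          ≤ ∑ y ∈ Bad, (∏ m, R (y m)) := by
            refine Finset.sum_le_sum fun y _ => ?_
            by_cases h : S (dEst S B (∑ m, χ (y m))) = S i
            · rw [if_pos h, mul_one]
            · rw [if_neg h, mul_zero]
              exact hPnn y
        _ ≤ ζ := hcheb
    have hGoodPart : ∑ y ∈ univ.filter
          (fun y : Fin B → A => ¬¬ |(∑ m, χ (y m)) - (B:ℝ)/2 * S i| < (B:ℝ)/(2*(N:ℝ))),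
          (∏ m, R (y m)) * (if S (dEst S B (∑ m, χ (y m))) = S i then 1 else 0)
        = ∑ y ∈ univ.filter
          (fun y : Fin B → A => ¬¬ |(∑ m, χ (y m)) - (B:ℝ)/2 * S i| < (B:ℝ)/(2*(N:ℝ))),
          (∏ m, R (y m)) := by
      refine Finset.sum_congr rfl fun y hy => ?_
      rw [Finset.mem_filter] at hy
      have hnotbad : y ∉ Bad := by
        rw [hBadDef, Finset.mem_filter]
        exact fun hc => hy.2 hc.2
      rw [if_pos (hGood y hnotbad), mul_one]
    have hsplit2 := Finset.sum_filter_add_sum_filter_not univ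
      (fun y : Fin B → A => ¬ |(∑ m, χ (y m)) - (B:ℝ)/2 * S i| < (B:ℝ)/(2*(N:ℝ)))
      (fun y => ∏ m, R (y m))
    rw [← hBadDef] at hsplit hsplit2
    have hGBnn : 0 ≤ ∑ y ∈ Bad, (∏ m, R (y m)) *
        (if S (dEst S B (∑ m, χ (y m))) = S i then 1 else 0) :=
      Finset.sum_nonneg fun y _ => mul_nonneg (hPnn y) (by positivity)
    have hBadNN : 0 ≤ ∑ y ∈ Bad, ∏ m, R (y m) :=
      Finset.sum_nonneg fun y _ => hPnn y
    linarith [hsplit, hsplit2, hGoodPart, hcheb, hGBnn, hPsum]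
end Invariant


section TV
variable {A : Type} [Fintype A] [DecidableEq A] [Nonempty A]

lemma tv_antitone (M : A → A → ℝ) (hMnn : ∀ i j, 0 ≤ M i j)
    (hMsum : ∀ i, ∑ j, M i j = 1) (B : ℕ) (i j : A) (n : ℕ) :
    tvDist (levelDist M B i (n+1)) (levelDist M B j (n+1))
      ≤ tvDist (levelDist M B i n) (levelDist M B j n) := by
  unfold tvDist
  have h2 : (0:ℝ) ≤ 1/2 := by norm_num
  refine mul_le_mul_of_nonneg_left ?_ h2
  have hdiff : ∀ τ : (Fin (n+1) → Fin B) → A,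
      levelDist M B i (n+1) τ - levelDist M B j (n+1) τ
      = ∑ σ : (Fin n → Fin B) → A, (levelDist M B i n σ - levelDist M B j n σ) *
          ∏ w : Fin (n+1) → Fin B, M (σ fun m => w m.castSucc) (τ w) := by
    intro τ
    show (∑ σ : (Fin n → Fin B) → A, levelDist M B i n σ * ∏ w, M (σ fun m => w m.castSucc) (τ w))
      - (∑ σ : (Fin n → Fin B) → A, levelDist M B j n σ * ∏ w, M (σ fun m => w m.castSucc) (τ w))
      = _
    rw [← Finset.sum_sub_distrib]
    exact Finset.sum_congr rfl fun σ _ => by ring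
  calc ∑ τ : (Fin (n+1) → Fin B) → A, |levelDist M B i (n+1) τ - levelDist M B j (n+1) τ|
      ≤ ∑ τ : (Fin (n+1) → Fin B) → A, ∑ σ : (Fin n → Fin B) → A,
          |levelDist M B i n σ - levelDist M B j n σ| *
          ∏ w : Fin (n+1) → Fin B, M (σ fun m => w m.castSucc) (τ w) := by
        refine Finset.sum_le_sum fun τ _ => ?_
        rw [hdiff τ]
        calc |∑ σ : (Fin n → Fin B) → A, (levelDist M B i n σ - levelDist M B j n σ) *
              ∏ w, M (σ fun m => w m.castSucc) (τ w)|
            ≤ ∑ σ : (Fin n → Fin B) → A, |(levelDist M B i n σ - levelDist M B j n σ) *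
              ∏ w, M (σ fun m => w m.castSucc) (τ w)| := Finset.abs_sum_le_sum_abs _ _
          _ ≤ ∑ σ : (Fin n → Fin B) → A, |levelDist M B i n σ - levelDist M B j n σ| *
              ∏ w, M (σ fun m => w m.castSucc) (τ w) := by
              refine Finset.sum_le_sum fun σ _ => ?_
              rw [abs_mul]
              refine mul_le_mul_of_nonneg_left ?_ (abs_nonneg _)
              rw [abs_of_nonneg (Finset.prod_nonneg fun w _ => hMnn _ _)]
    _ = ∑ σ : (Fin n → Fin B) → A, |levelDist M B i n σ - levelDist M B j n σ| := by
        rw [Finset.sum_comm]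
        refine Finset.sum_congr rfl fun σ _ => ?_
        rw [← Finset.mul_sum]
        rw [sum_func_prod (fun (w : Fin (n+1) → Fin B) (a : A) => M (σ fun m => w m.castSucc) a)]
        rw [Finset.prod_congr rfl fun w _ => hMsum _, Finset.prod_const_one, mul_one]

lemma tv_nonneg {Ω : Type*} [Fintype Ω] (P Q : Ω → ℝ) : 0 ≤ tvDist P Q := by
  unfold tvDist
  have := Finset.sum_nonneg (fun σ (_ : σ ∈ (univ : Finset Ω)) => abs_nonneg (P σ - Q σ))
  linarith

/-- data-processing style lower bound on the total variation distance. -/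
lemma tv_lower (M : A → A → ℝ) (χ S : A → ℝ) (N : ℕ) (hN : 3 ≤ N)
    (hMnn : ∀ i j, 0 ≤ M i j) (hMsum : ∀ i, ∑ j, M i j = 1)
    (hχ1 : ∀ a, χ a = 1 ∨ χ a = -1)
    (hmean : ∀ i, ∑ a, M i a * χ a = S i / 2)
    (hdet : ∀ a c, S a = S c → χ a = χ c)
    (hgap : ∀ a c, S a ≠ S c → 2 / (N:ℝ) ≤ |S a - S c|)
    (i₀ j₀ : A) (hij : S i₀ ≠ S j₀) (n : ℕ) :
    1 - 2/(16*(N:ℝ)) ≤ tvDist (levelDist M (1024 * N^3) i₀ n) (levelDist M (1024 * N^3) j₀ n) := by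
  set B : ℕ := 1024 * N^3 with hBdef
  set ζ : ℝ := 1/(16*(N:ℝ)) with hζdef
  set f : ((Fin n → Fin B) → A) → ℝ :=
    fun σ => if S (Yhat χ S B n σ) = S i₀ then 1 else -1 with hfdef
  have hfbd : ∀ σ, |f σ| ≤ 1 := by
    intro σ
    simp only [hfdef]
    by_cases h : S (Yhat χ S B n σ) = S i₀
    · rw [if_pos h]; simp
    · rw [if_neg h]; simp
  -- expectation of f under each measure
  have hexp : ∀ i : A, ∑ σ : (Fin n → Fin B) → A, levelDist M B i n σ * f σ
      = 2 * (∑ a, Qm M χ S B n i a * (if S a = S i₀ then 1 else 0)) - 1 := by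
    intro i
    have h1 : ∑ a, Qm M χ S B n i a * (if S a = S i₀ then 1 else 0)
        = ∑ σ : (Fin n → Fin B) → A, levelDist M B i n σ *
          (if S (Yhat χ S B n σ) = S i₀ then 1 else 0) := by
      unfold Qm
      rw [Finset.sum_congr rfl fun a (_ : a ∈ univ) => Finset.sum_mul univ _ _]
      rw [Finset.sum_comm]
      refine Finset.sum_congr rfl fun σ _ => ?_
      rw [Finset.sum_eq_single (Yhat χ S B n σ)
        (fun a _ ha => by rw [if_neg (fun hh => ha hh.symm), mul_zero, zero_mul])
        (fun h => absurd (mem_univ _) h)]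
      rw [if_pos rfl, mul_one]
    have h2 : ∀ σ : (Fin n → Fin B) → A, f σ =
        2 * (if S (Yhat χ S B n σ) = S i₀ then (1:ℝ) else 0) - 1 := by
      intro σ
      simp only [hfdef]
      by_cases h : S (Yhat χ S B n σ) = S i₀
      · rw [if_pos h, if_pos h]; norm_num
      · rw [if_neg h, if_neg h]; norm_num
    rw [h1]
    rw [Finset.sum_congr rfl fun σ (_ : σ ∈ univ) => show
      levelDist M B i n σ * f σ
      = 2 * (levelDist M B i n σ * (if S (Yhat χ S B n σ) = S i₀ then 1 else 0))
        - levelDist M B i n σ from by rw [h2 σ]; ring]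
    rw [Finset.sum_sub_distrib, ← Finset.mul_sum, levelDist_sum_one M hMsum B i n, ← h1]
  have hζpos : 0 < ζ := by
    rw [hζdef]
    have : (0:ℝ) < (N:ℝ) := by exact_mod_cast Nat.lt_of_lt_of_le (by norm_num) hN
    positivity
  have hQi := invariant M χ S N hN hMnn hMsum hχ1 hmean hdet hgap n i₀
  have hQj := invariant M χ S N hN hMnn hMsum hχ1 hmean hdet hgap n j₀
  have hdisj : ∑ a, Qm M χ S B n j₀ a * (if S a = S i₀ then 1 else 0) ≤ ζ := by
    have h3 : (∑ a, Qm M χ S B n j₀ a * (if S a = S i₀ then 1 else 0))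
        + (∑ a, Qm M χ S B n j₀ a * (if S a = S j₀ then 1 else 0)) ≤ 1 := by
      rw [← Finset.sum_add_distrib]
      calc ∑ a, (Qm M χ S B n j₀ a * (if S a = S i₀ then 1 else 0)
            + Qm M χ S B n j₀ a * (if S a = S j₀ then 1 else 0))
          ≤ ∑ a, Qm M χ S B n j₀ a := by
            refine Finset.sum_le_sum fun a _ => ?_
            have hq := Qm_nonneg M hMnn χ S B n j₀ a
            by_cases ha : S a = S i₀
            · have hb : ¬ (S a = S j₀) := fun hb => hij (ha ▸ hb ▸ rfl)
              rw [if_pos ha, if_neg hb]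
              linarith
            · rw [if_neg ha]
              by_cases hb : S a = S j₀
              · rw [if_pos hb]; linarith
              · rw [if_neg hb]; linarith
        _ = 1 := Qm_sum M hMsum χ S B n j₀
    linarith [hQj]
  have key : (2:ℝ) - 4*ζ ≤
      ∑ σ : (Fin n → Fin B) → A, (levelDist M B i₀ n σ - levelDist M B j₀ n σ) * f σ := by
    have hsub : ∑ σ : (Fin n → Fin B) → A,
        (levelDist M B i₀ n σ - levelDist M B j₀ n σ) * f σ
        = (∑ σ : (Fin n → Fin B) → A, levelDist M B i₀ n σ * f σ)
          - ∑ σ : (Fin n → Fin B) → A, levelDist M B j₀ n σ * f σ := by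
      rw [← Finset.sum_sub_distrib]
      exact Finset.sum_congr rfl fun σ _ => by ring
    rw [hsub, hexp i₀, hexp j₀]
    linarith [hQi, hdisj]
  have hhalf : tvDist (levelDist M B i₀ n) (levelDist M B j₀ n)
      ≥ (1/2) * ∑ σ : (Fin n → Fin B) → A,
        (levelDist M B i₀ n σ - levelDist M B j₀ n σ) * f σ := by
    unfold tvDist
    have h2 : (0:ℝ) ≤ 1/2 := by norm_num
    refine mul_le_mul_of_nonneg_left ?_ h2
    refine Finset.sum_le_sum fun σ _ => ?_
    calc (levelDist M B i₀ n σ - levelDist M B j₀ n σ) * f σ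
        ≤ |(levelDist M B i₀ n σ - levelDist M B j₀ n σ) * f σ| := le_abs_self _
      _ = |levelDist M B i₀ n σ - levelDist M B j₀ n σ| * |f σ| := abs_mul _ _
      _ ≤ |levelDist M B i₀ n σ - levelDist M B j₀ n σ| * 1 :=
          mul_le_mul_of_nonneg_left (hfbd σ) (abs_nonneg _)
      _ = _ := mul_one _
  have : (1/2 : ℝ) * (2 - 4*ζ) ≤ (1/2) * ∑ σ : (Fin n → Fin B) → A,
      (levelDist M B i₀ n σ - levelDist M B j₀ n σ) * f σ :=
    mul_le_mul_of_nonneg_left key (by norm_num)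
  have hfin : 1 - 2*ζ ≤ tvDist (levelDist M B i₀ n) (levelDist M B j₀ n) := by
    calc (1:ℝ) - 2*ζ = (1/2) * (2 - 4*ζ) := by ring
      _ ≤ _ := le_trans this hhalf
  calc (1:ℝ) - 2/(16*(N:ℝ)) = 1 - 2*ζ := by rw [hζdef]; ring
    _ ≤ _ := hfin
end TV

section Construction
open Polynomial

def sgn (β : Bool) : ℝ := if β then -1 else 1

def chiF {N : ℕ} (y : Fin N → Bool) : ℝ := ∏ j, sgn (y j)

def SmF {N : ℕ} (y : Fin N → Bool) : ℝ := ∑ j, sgn (y j)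

def cntF {N : ℕ} (y : Fin N → Bool) : ℕ := (univ.filter (fun j => y j = true)).card

lemma sgn_pm (β : Bool) : sgn β = 1 ∨ sgn β = -1 := by
  cases β <;> simp [sgn]

lemma abs_sgn (β : Bool) : |sgn β| = 1 := by
  cases β <;> simp [sgn]

lemma sgn_eq_pow (β : Bool) : sgn β = (-1:ℝ) ^ (if β = true then 1 else 0 : ℕ) := by
  cases β <;> simp [sgn]

lemma chiF_eq {N : ℕ} (y : Fin N → Bool) : chiF y = (-1:ℝ) ^ (cntF y) := by
  unfold chiF cntF
  rw [Finset.prod_congr rfl fun j _ => sgn_eq_pow (y j)]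
  rw [Finset.prod_pow_eq_pow_sum]
  congr 1
  rw [Finset.card_filter]

lemma SmF_eq {N : ℕ} (y : Fin N → Bool) : SmF y = (N:ℝ) - 2 * (cntF y : ℝ) := by
  unfold SmF cntF
  have : ∀ j, sgn (y j) = 1 - 2 * (if y j = true then (1:ℝ) else 0) := by
    intro j; cases hyj : y j <;> norm_num [sgn]
  rw [Finset.sum_congr rfl fun j _ => this j]
  rw [Finset.sum_sub_distrib, Finset.sum_const, Finset.card_univ, Fintype.card_fin,
    nsmul_eq_mul, mul_one, ← Finset.mul_sum, Finset.sum_boole]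

lemma chiF_pm {N : ℕ} (y : Fin N → Bool) : chiF y = 1 ∨ chiF y = -1 := by
  rw [chiF_eq]
  rcases Nat.even_or_odd (cntF y) with h | h
  · left; exact h.neg_one_pow
  · right; exact h.neg_one_pow

lemma abs_chiF {N : ℕ} (y : Fin N → Bool) : |chiF y| = 1 := by
  rcases chiF_pm y with h | h <;> rw [h] <;> simp

lemma chiF_sq {N : ℕ} (y : Fin N → Bool) : chiF y * chiF y = 1 := by
  rcases chiF_pm y with h | h <;> rw [h] <;> norm_num

lemma abs_SmF_le {N : ℕ} (y : Fin N → Bool) : |SmF y| ≤ (N:ℝ) := by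
  unfold SmF
  calc |∑ j, sgn (y j)| ≤ ∑ j, |sgn (y j)| := Finset.abs_sum_le_sum_abs _ _
    _ = ∑ j : Fin N, (1:ℝ) := Finset.sum_congr rfl fun j _ => abs_sgn (y j)
    _ = (N:ℝ) := by rw [Finset.sum_const, Finset.card_univ, Fintype.card_fin, nsmul_eq_mul, mul_one]

lemma SmF_det {N : ℕ} (y y' : Fin N → Bool) (h : SmF y = SmF y') : chiF y = chiF y' := by
  have hc : cntF y = cntF y' := by
    rw [SmF_eq, SmF_eq] at h
    have : (cntF y : ℝ) = (cntF y' : ℝ) := by linarith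
    exact_mod_cast this
  rw [chiF_eq, chiF_eq, hc]

lemma SmF_gap {N : ℕ} (y y' : Fin N → Bool) (h : SmF y ≠ SmF y') :
    2 ≤ |SmF y - SmF y'| := by
  have hc : cntF y ≠ cntF y' := fun hc => h (by rw [SmF_eq, SmF_eq, hc])
  rw [SmF_eq, SmF_eq]
  have habs : |SmF y - SmF y'| = 2 * |(cntF y' : ℝ) - (cntF y : ℝ)| := by
    rw [SmF_eq, SmF_eq, show (N:ℝ) - 2*(cntF y:ℝ) - ((N:ℝ) - 2*(cntF y':ℝ))
      = 2*((cntF y':ℝ) - (cntF y:ℝ)) from by ring, abs_mul]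
    norm_num
  rw [SmF_eq, SmF_eq] at habs
  rw [habs]
  have h1 : (1:ℝ) ≤ |(cntF y' : ℝ) - (cntF y : ℝ)| := by
    rcases lt_or_gt_of_ne (fun hh => hc hh.symm) with hlt | hgt
    · have : (cntF y' : ℝ) + 1 ≤ (cntF y : ℝ) := by exact_mod_cast Nat.succ_le_of_lt hlt
      rw [abs_sub_comm, abs_of_nonneg (by linarith)]
      linarith
    · have : (cntF y : ℝ) + 1 ≤ (cntF y' : ℝ) := by exact_mod_cast Nat.succ_le_of_lt hgt
      rw [abs_of_nonneg (by linarith)]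
      linarith
  linarith

lemma sum_sgn : (sgn true) + (sgn false) = 0 := by simp [sgn]

lemma sum_chiF {N : ℕ} (hN : 0 < N) : ∑ y : Fin N → Bool, chiF y = 0 := by
  unfold chiF
  rw [sum_func_prod (fun (_ : Fin N) (β : Bool) => sgn β)]
  refine Finset.prod_eq_zero (mem_univ (⟨0, hN⟩ : Fin N)) ?_
  rw [Fintype.sum_bool]
  exact sum_sgn

lemma card_bool_fun {N : ℕ} : Fintype.card (Fin N → Bool) = 2^N := by
  rw [Fintype.card_fun, Fintype.card_bool, Fintype.card_fin]

lemma sum_chiF_sq {N : ℕ} : ∑ y : Fin N → Bool, chiF y * chiF y = 2^N := by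
  rw [Finset.sum_congr rfl fun y _ => chiF_sq y, Finset.sum_const, Finset.card_univ,
    card_bool_fun, nsmul_eq_mul, mul_one]
  push_cast
  ring

/-- the key character-moment identity: low moments of `SmF` weighted by `chiF` vanish. -/
lemma charmoment {N : ℕ} (t : ℕ) (ht : t < N) :
    ∑ y : Fin N → Bool, chiF y * (SmF y) ^ t = 0 := by
  have hpow : ∀ y : Fin N → Bool, (SmF y)^t
      = ∑ p : Fin t → Fin N, ∏ k, sgn (y (p k)) := by
    intro y
    have h1 : (SmF y)^t = ∏ _k : Fin t, SmF y := by
      rw [Finset.prod_const, Finset.card_univ, Fintype.card_fin]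
    rw [h1]
    unfold SmF
    rw [Finset.prod_univ_sum (fun _ => (univ : Finset (Fin N)))
      (fun (_ : Fin t) (j : Fin N) => sgn (y j))]
    exact Finset.sum_congr (by rw [Fintype.piFinset_univ]) fun _ _ => rfl
  rw [Finset.sum_congr rfl fun y _ => by rw [hpow y, Finset.mul_sum]]
  rw [Finset.sum_comm]
  refine Finset.sum_eq_zero fun p _ => ?_
  -- regroup the product over k by fibers of p
  have hfib : ∀ y : Fin N → Bool, ∏ k, sgn (y (p k))
      = ∏ j : Fin N, sgn (y j) ^ ((univ.filter (fun k => p k = j)).card) := by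
    intro y
    rw [← Finset.prod_fiberwise_of_maps_to (fun k _ => mem_univ (p k))
      (fun k => sgn (y (p k)))]
    refine Finset.prod_congr rfl fun j _ => ?_
    rw [Finset.prod_congr rfl fun k hk => by
      rw [(Finset.mem_filter.mp hk).2]]
    rw [Finset.prod_const]
  have hcombine : ∀ y : Fin N → Bool, chiF y *
      ∏ j : Fin N, sgn (y j) ^ ((univ.filter (fun k => p k = j)).card)
      = ∏ j : Fin N, sgn (y j) ^ (1 + (univ.filter (fun k => p k = j)).card) := by
    intro y
    unfold chiF
    rw [← Finset.prod_mul_distrib]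
    exact Finset.prod_congr rfl fun j _ => by rw [pow_add, pow_one]
  rw [Finset.sum_congr rfl fun y _ => by rw [hfib y, hcombine y]]
  rw [sum_func_prod (fun (j : Fin N) (β : Bool) =>
    sgn β ^ (1 + (univ.filter (fun k => p k = j)).card))]
  -- pigeonhole: some fiber is empty
  have hsum : ∑ j : Fin N, (univ.filter (fun k => p k = j)).card = t := by
    rw [← Finset.card_eq_sum_card_fiberwise (fun k (_ : k ∈ univ) => mem_univ (p k))]
    rw [Finset.card_univ, Fintype.card_fin]
  have hex : ∃ j : Fin N, (univ.filter (fun k => p k = j)).card = 0 := by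
    by_contra hno
    push_neg at hno
    have : ∀ j : Fin N, 1 ≤ (univ.filter (fun k => p k = j)).card :=
      fun j => Nat.one_le_iff_ne_zero.mpr (hno j)
    have hge : (N:ℕ) ≤ ∑ j : Fin N, (univ.filter (fun k => p k = j)).card := by
      calc (N:ℕ) = ∑ _j : Fin N, 1 := by
            rw [Finset.sum_const, Finset.card_univ, Fintype.card_fin, smul_eq_mul, mul_one]
        _ ≤ _ := Finset.sum_le_sum fun j _ => this j
    omega
  obtain ⟨j0, hj0⟩ := hex
  refine Finset.prod_eq_zero (mem_univ j0) ?_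
  rw [hj0, Fintype.sum_bool]
  norm_num [sgn]

/-- the channel. -/
noncomputable def M0 (N : ℕ) (y z : Fin N → Bool) : ℝ :=
  (1 + (SmF y / (2*(N:ℝ))) * chiF z) / 2^N

lemma M0_nonneg {N : ℕ} (hN : 0 < N) (y z : Fin N → Bool) : 0 ≤ M0 N y z := by
  unfold M0
  have hNr : (0:ℝ) < (N:ℝ) := by exact_mod_cast hN
  have h1 : |SmF y / (2*(N:ℝ)) * chiF z| ≤ 1/2 := by
    rw [abs_mul, abs_chiF, mul_one, abs_div]
    rw [abs_of_nonneg (by positivity : (0:ℝ) ≤ 2*(N:ℝ))]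
    rw [div_le_iff₀ (by positivity)]
    calc |SmF y| ≤ (N:ℝ) := abs_SmF_le y
      _ = 1/2 * (2*(N:ℝ)) := by ring
  have h2 : -(1/2 : ℝ) ≤ SmF y / (2*(N:ℝ)) * chiF z := by
    have := abs_le.mp h1
    linarith [this.1]
  apply div_nonneg
  · linarith
  · positivity

lemma M0_rowsum {N : ℕ} (hN : 0 < N) (y : Fin N → Bool) : ∑ z, M0 N y z = 1 := by
  unfold M0
  rw [← Finset.sum_div]
  rw [Finset.sum_add_distrib, ← Finset.mul_sum, sum_chiF hN, mul_zero, add_zero,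
    Finset.sum_const, Finset.card_univ, card_bool_fun, nsmul_eq_mul, mul_one]
  push_cast
  rw [div_self (by positivity)]

lemma M0_mean {N : ℕ} (hN : 0 < N) (y : Fin N → Bool) :
    ∑ z, M0 N y z * chiF z = (SmF y / (N:ℝ)) / 2 := by
  unfold M0
  have hNr : (0:ℝ) < (N:ℝ) := by exact_mod_cast hN
  rw [Finset.sum_congr rfl fun z _ => show
    (1 + SmF y / (2*(N:ℝ)) * chiF z) / 2^N * chiF z
    = (chiF z + SmF y / (2*(N:ℝ)) * (chiF z * chiF z)) / 2^N from by ring]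
  rw [← Finset.sum_div, Finset.sum_add_distrib, sum_chiF hN, ← Finset.mul_sum, sum_chiF_sq]
  rw [zero_add]
  field_simp

lemma M0_diff {N : ℕ} (y y' z : Fin N → Bool) :
    M0 N y z - M0 N y' z = (SmF y / (N:ℝ) - SmF y' / (N:ℝ)) * ((1/(2*2^N)) * chiF z) := by
  unfold M0
  by_cases hN : (N:ℝ) = 0
  · rw [hN]
    simp
  · field_simp
    ring

/-- the kernel vanishing property : products of at most `N-1` channel entries
are orthogonal to the character. -/
lemma M0_kernel {N : ℕ} {W : Type} [DecidableEq W] (s : Finset W)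
    (x : W → (Fin N → Bool)) (hcard : s.card < N) :
    ∑ a : Fin N → Bool, chiF a * ∏ w ∈ s, M0 N a (x w) = 0 := by
  set p : Polynomial ℝ := ∏ w ∈ s, (C ((1:ℝ)/2^N) * (C 1 + C (chiF (x w)/(2*(N:ℝ))) * X))
    with hpdef
  have heval : ∀ a : Fin N → Bool, (∏ w ∈ s, M0 N a (x w)) = p.eval (SmF a) := by
    intro a
    rw [hpdef, Polynomial.eval_prod]
    refine Finset.prod_congr rfl fun w _ => ?_
    simp only [Polynomial.eval_mul, Polynomial.eval_add, Polynomial.eval_C,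
      Polynomial.eval_X, Polynomial.eval_one]
    unfold M0
    ring
  have hdeg : p.natDegree ≤ s.card := by
    rw [hpdef]
    calc (∏ w ∈ s, (C ((1:ℝ)/2^N) * (C 1 + C (chiF (x w)/(2*(N:ℝ))) * X))).natDegree
        ≤ ∑ w ∈ s, (C ((1:ℝ)/2^N) * (C 1 + C (chiF (x w)/(2*(N:ℝ))) * X)).natDegree :=
          Polynomial.natDegree_prod_le s _
      _ ≤ ∑ _w ∈ s, 1 := by
          refine Finset.sum_le_sum fun w _ => ?_
          calc (C ((1:ℝ)/2^N) * (C 1 + C (chiF (x w)/(2*(N:ℝ))) * X)).natDegree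
              ≤ (C 1 + C (chiF (x w)/(2*(N:ℝ))) * X).natDegree :=
                Polynomial.natDegree_C_mul_le _ _
            _ ≤ max (C 1 : Polynomial ℝ).natDegree (C (chiF (x w)/(2*(N:ℝ))) * X).natDegree :=
                Polynomial.natDegree_add_le _ _
            _ ≤ 1 := by
                rw [Polynomial.natDegree_C]
                simp only [max_le_iff]
                refine ⟨Nat.zero_le 1, ?_⟩
                calc (C (chiF (x w)/(2*(N:ℝ))) * X).natDegree
                    ≤ (X : Polynomial ℝ).natDegree := Polynomial.natDegree_C_mul_le _ _
                  _ ≤ 1 := Polynomial.natDegree_X_le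
      _ = s.card := by rw [Finset.sum_const, smul_eq_mul, mul_one]
  rw [Finset.sum_congr rfl fun a _ => by rw [heval a, Polynomial.eval_eq_sum_range,
    Finset.mul_sum]]
  rw [Finset.sum_comm]
  refine Finset.sum_eq_zero fun t ht => ?_
  rw [Finset.mem_range] at ht
  have ht' : t < N := by omega
  rw [Finset.sum_congr rfl fun a (_ : a ∈ univ) => show
    chiF a * (p.coeff t * SmF a ^ t) = p.coeff t * (chiF a * SmF a ^ t) from by ring]
  rw [← Finset.mul_sum, charmoment t ht', mul_zero]

end Construction

section Level2
variable {A : Type} [Fintype A] [DecidableEq A]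

lemma levelDist_one (M : A → A → ℝ) {b : ℕ} (i : A) (c : (Fin 1 → Fin b) → A) :
    levelDist M b i 1 c = ∏ u : Fin 1 → Fin b, M i (c u) := by
  show (∑ σ : (Fin 0 → Fin b) → A, (if σ = fun _ => i then (1:ℝ) else 0) *
      ∏ w : Fin 1 → Fin b, M (σ fun m => w m.castSucc) (c w)) = _
  rw [Finset.sum_eq_single (fun _ => i : (Fin 0 → Fin b) → A)
    (fun σ _ hσ => by rw [if_neg hσ, zero_mul]) (fun h => absurd (mem_univ _) h)]
  rw [if_pos rfl, one_mul]

lemma level2_eq (M : A → A → ℝ) {b : ℕ} (i : A) (σ : (Fin 2 → Fin b) → A) :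
    levelDist M b i 2 σ = ∏ u : Fin 1 → Fin b, ∑ a, M i a *
      ∏ w ∈ univ.filter (fun w : Fin 2 → Fin b => (fun m : Fin 1 => w m.castSucc) = u),
        M a (σ w) := by
  have hK : ∀ c : (Fin 1 → Fin b) → A,
      (∏ w : Fin 2 → Fin b, M (c fun m => w m.castSucc) (σ w))
      = ∏ u : Fin 1 → Fin b,
          ∏ w ∈ univ.filter (fun w : Fin 2 → Fin b => (fun m : Fin 1 => w m.castSucc) = u),
            M (c u) (σ w) := by
    intro c
    rw [← Finset.prod_fiberwise_of_maps_to (fun w (_ : w ∈ (univ : Finset (Fin 2 → Fin b))) =>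
      mem_univ (fun m : Fin 1 => w m.castSucc)) (fun w => M (c fun m => w m.castSucc) (σ w))]
    refine Finset.prod_congr rfl fun u _ => Finset.prod_congr rfl fun w hw => ?_
    rw [(Finset.mem_filter.mp hw).2]
  show (∑ c : (Fin 1 → Fin b) → A, levelDist M b i 1 c *
      ∏ w : Fin 2 → Fin b, M (c fun m => w m.castSucc) (σ w)) = _
  rw [Finset.sum_congr rfl fun c _ => by
    rw [levelDist_one M i c, hK c, ← Finset.prod_mul_distrib]]
  exact sum_func_prod (fun (u : Fin 1 → Fin b) (a : A) => M i a *
    ∏ w ∈ univ.filter (fun w : Fin 2 → Fin b => (fun m : Fin 1 => w m.castSucc) = u),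
      M a (σ w))

lemma fiber_card_le {b : ℕ} (u : Fin 1 → Fin b) :
    (univ.filter (fun w : Fin 2 → Fin b => (fun m : Fin 1 => w m.castSucc) = u)).card ≤ b := by
  have hinj : Set.InjOn (fun w : Fin 2 → Fin b => w 1)
      (univ.filter (fun w : Fin 2 → Fin b => (fun m : Fin 1 => w m.castSucc) = u)) := by
    intro w hw w' hw' h1
    have e := (Finset.mem_filter.mp (Finset.mem_coe.mp hw)).2
    have e' := (Finset.mem_filter.mp (Finset.mem_coe.mp hw')).2
    funext j
    refine Fin.cases ?_ ?_ j
    · have g1 := congrFun e 0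
      have g2 := congrFun e' 0
      simp only [Fin.castSucc_zero] at g1 g2
      rw [g1, g2]
    · intro m
      have hm : m = 0 := Subsingleton.elim _ _
      subst hm
      have h10 : Fin.succ (0 : Fin 1) = (1 : Fin 2) := rfl
      rw [h10]
      exact h1
  have h2 := Finset.card_le_card_of_injOn (t := (univ : Finset (Fin b)))
    (fun w : Fin 2 → Fin b => w 1) (fun w _ => mem_univ _) hinj
  calc _ ≤ (univ : Finset (Fin b)).card := h2
    _ = b := by rw [Finset.card_univ, Fintype.card_fin]

lemma level2_const (M : A → A → ℝ) (χ S : A → ℝ) (c₀ : ℝ) {b : ℕ}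
    (hdiff : ∀ i i' a, M i a - M i' a = (S i - S i') * (c₀ * χ a))
    (hker : ∀ (sF : Finset (Fin 2 → Fin b)) (x : (Fin 2 → Fin b) → A), sF.card ≤ b →
      ∑ a, χ a * ∏ w ∈ sF, M a (x w) = 0)
    (i i' : A) (σ : (Fin 2 → Fin b) → A) :
    levelDist M b i 2 σ = levelDist M b i' 2 σ := by
  rw [level2_eq, level2_eq]
  refine Finset.prod_congr rfl fun u _ => ?_
  have h := hker (univ.filter (fun w : Fin 2 → Fin b => (fun m : Fin 1 => w m.castSucc) = u))
    (fun w => σ w) (fiber_card_le u)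
  have hzero : (∑ a, M i a *
      ∏ w ∈ univ.filter (fun w : Fin 2 → Fin b => (fun m : Fin 1 => w m.castSucc) = u),
        M a (σ w))
      - (∑ a, M i' a *
      ∏ w ∈ univ.filter (fun w : Fin 2 → Fin b => (fun m : Fin 1 => w m.castSucc) = u),
        M a (σ w)) = 0 := by
    rw [← Finset.sum_sub_distrib]
    rw [Finset.sum_congr rfl fun a (_ : a ∈ univ) => show
      M i a * (∏ w ∈ univ.filter (fun w : Fin 2 → Fin b =>
          (fun m : Fin 1 => w m.castSucc) = u), M a (σ w))
        - M i' a * (∏ w ∈ univ.filter (fun w : Fin 2 → Fin b =>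
          (fun m : Fin 1 => w m.castSucc) = u), M a (σ w))
      = (S i - S i') * c₀ * (χ a * ∏ w ∈ univ.filter (fun w : Fin 2 → Fin b =>
          (fun m : Fin 1 => w m.castSucc) = u), M a (σ w)) from by
        rw [← sub_mul, hdiff i i' a]
        ring]
    rw [← Finset.mul_sum, h, mul_zero]
  linarith
end Level2

/-- For every `b > 1` there is a channel `M` on a finite alphabet such that the
root variable and the configuration at the leaves of the 2-level `b`-ary tree
are independent for every initial distribution, yet for sufficiently large `B`
the reconstruction problem for the infinite `B`-ary tree and `M` is solvable. -/
theorem exists_channel_two_level_independent_yet_solvable (b : ℕ) (hb : 1 < b) :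
    ∃ (k : ℕ) (M : Fin k → Fin k → ℝ),
      (∀ i j, 0 ≤ M i j) ∧ (∀ i, ∑ j, M i j = 1) ∧
      -- (1) for every initial distribution `π` on the root, the root value and
      -- the configuration at the `b²` leaves of the 2-level `b`-ary tree are
      -- independent: `P[σ_ρ = i, σ_∂ = σ] = P[σ_ρ = i] ⬝ P[σ_∂ = σ]`.
      (∀ π : Fin k → ℝ, (∀ i, 0 ≤ π i) → ∑ i, π i = 1 →
        ∀ (i : Fin k) (σ : (Fin 2 → Fin b) → Fin k),
          π i * levelDist M b i 2 σ = π i * ∑ j, π j * levelDist M b j 2 σ) ∧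
      -- (2) for some `B`, the reconstruction problem for `T_B` and `M` is solvable.
      (∃ B : ℕ, ∃ i j : Fin k, ∃ L > 0, Tendsto
        (fun n => tvDist (levelDist M B i n) (levelDist M B j n)) atTop (nhds L)) := by
  set N : ℕ := b + 1 with hNdef
  have hN3 : 3 ≤ N := by omega
  have hN0 : 0 < N := by omega
  have hNr : (0:ℝ) < (N:ℝ) := by exact_mod_cast hN0
  have hNr3 : (3:ℝ) ≤ (N:ℝ) := by exact_mod_cast hN3
  set e : (Fin N → Bool) ≃ Fin (2^N) :=
    (Equiv.arrowCongr (Equiv.refl (Fin N)) finTwoEquiv.symm).trans finFunctionFinEquiv with hedef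
  haveI : Nonempty (Fin (2^N)) := ⟨⟨0, by positivity⟩⟩
  set Mk : Fin (2^N) → Fin (2^N) → ℝ := fun i j => M0 N (e.symm i) (e.symm j) with hMkdef
  set χk : Fin (2^N) → ℝ := fun i => chiF (e.symm i) with hχkdef
  set Sk : Fin (2^N) → ℝ := fun i => SmF (e.symm i) / (N:ℝ) with hSkdef
  have hMnn : ∀ i j, 0 ≤ Mk i j := fun i j => M0_nonneg hN0 _ _
  have hMsum : ∀ i, ∑ j, Mk i j = 1 := by
    intro i
    rw [show (∑ j, Mk i j) = ∑ z : Fin N → Bool, M0 N (e.symm i) z from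
      (Equiv.sum_comp e.symm (fun z => M0 N (e.symm i) z)).symm ▸
        (Equiv.sum_comp e.symm (fun z => M0 N (e.symm i) z))]
    exact M0_rowsum hN0 _
  have hχ1 : ∀ a, χk a = 1 ∨ χk a = -1 := fun a => chiF_pm _
  have hmean : ∀ i, ∑ a, Mk i a * χk a = Sk i / 2 := by
    intro i
    rw [show (∑ a, Mk i a * χk a) = ∑ z : Fin N → Bool, M0 N (e.symm i) z * chiF z from
      Equiv.sum_comp e.symm (fun z => M0 N (e.symm i) z * chiF z)]
    exact M0_mean hN0 _
  have hdet : ∀ a c, Sk a = Sk c → χk a = χk c := by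
    intro a c h
    rw [hSkdef] at h
    have h2 : SmF (e.symm a) = SmF (e.symm c) := by
      field_simp at h
      exact h
    exact SmF_det _ _ h2
  have hgap : ∀ a c, Sk a ≠ Sk c → 2 / (N:ℝ) ≤ |Sk a - Sk c| := by
    intro a c h
    have h2 : SmF (e.symm a) ≠ SmF (e.symm c) := by
      intro hh
      exact h (by rw [hSkdef]; simp only [hh])
    have h3 := SmF_gap _ _ h2
    rw [hSkdef]
    rw [show SmF (e.symm a) / (N:ℝ) - SmF (e.symm c) / (N:ℝ)
      = (SmF (e.symm a) - SmF (e.symm c)) / (N:ℝ) from by ring]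
    rw [abs_div, abs_of_nonneg (le_of_lt hNr)]
    gcongr
  -- the two distinguished states
  set i₀ : Fin (2^N) := e (fun _ => false) with hi₀def
  set j₀ : Fin (2^N) := e (fun _ => true) with hj₀def
  have hSmi : SmF (e.symm i₀) = (N:ℝ) := by
    rw [hi₀def, Equiv.symm_apply_apply]
    unfold SmF
    rw [Finset.sum_congr rfl fun j _ => show sgn false = (1:ℝ) from by simp [sgn]]
    rw [Finset.sum_const, Finset.card_univ, Fintype.card_fin, nsmul_eq_mul, mul_one]
  have hSmj : SmF (e.symm j₀) = -(N:ℝ) := by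
    rw [hj₀def, Equiv.symm_apply_apply]
    unfold SmF
    rw [Finset.sum_congr rfl fun j _ => show sgn true = (-1:ℝ) from by simp [sgn]]
    rw [Finset.sum_const, Finset.card_univ, Fintype.card_fin, nsmul_eq_mul, mul_neg_one]
  have hij : Sk i₀ ≠ Sk j₀ := by
    rw [hSkdef]
    simp only [hSmi, hSmj]
    rw [div_self (ne_of_gt hNr)]
    rw [show -(N:ℝ)/(N:ℝ) = -1 from by field_simp]
    norm_num
  refine ⟨2^N, Mk, hMnn, hMsum, ?_, ?_⟩
  · -- condition (1) : two-level independence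
    have hdiff : ∀ i i' a, Mk i a - Mk i' a = (Sk i - Sk i') * ((1/(2*2^N)) * χk a) :=
      fun i i' a => M0_diff _ _ _
    have hker : ∀ (sF : Finset (Fin 2 → Fin b)) (x : (Fin 2 → Fin b) → Fin (2^N)),
        sF.card ≤ b → ∑ a, χk a * ∏ w ∈ sF, Mk a (x w) = 0 := by
      intro sF x hcard
      rw [show (∑ a, χk a * ∏ w ∈ sF, Mk a (x w))
        = ∑ z : Fin N → Bool, chiF z * ∏ w ∈ sF, M0 N z (e.symm (x w)) from
        Equiv.sum_comp e.symm (fun z => chiF z * ∏ w ∈ sF, M0 N z (e.symm (x w)))]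
      exact M0_kernel sF (fun w => e.symm (x w)) (by omega)
    have hconst : ∀ (i i' : Fin (2^N)) (σ : (Fin 2 → Fin b) → Fin (2^N)),
        levelDist Mk b i 2 σ = levelDist Mk b i' 2 σ :=
      fun i i' σ => level2_const Mk χk Sk (1/(2*2^N)) hdiff hker i i' σ
    intro π hπ hπ1 i σ
    have hmix : (∑ j, π j * levelDist Mk b j 2 σ) = levelDist Mk b i 2 σ := by
      rw [Finset.sum_congr rfl fun j (_ : j ∈ univ) => by rw [hconst j i σ]]
      rw [← Finset.sum_mul, hπ1, one_mul]
    rw [hmix]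
  · -- condition (2) : solvability on the B-ary tree
    refine ⟨1024 * N^3, i₀, j₀, ?_⟩
    set F : ℕ → ℝ := fun n => tvDist (levelDist Mk (1024 * N^3) i₀ n)
      (levelDist Mk (1024 * N^3) j₀ n) with hFdef
    have hanti : Antitone F := antitone_nat_of_succ_le
      (fun n => tv_antitone Mk hMnn hMsum (1024 * N^3) i₀ j₀ n)
    have hbdd : BddBelow (Set.range F) := by
      refine ⟨0, ?_⟩
      rintro x ⟨n, rfl⟩
      exact tv_nonneg _ _
    have htend := tendsto_atTop_ciInf hanti hbdd
    have hlow : ∀ n, 1 - 2/(16*(N:ℝ)) ≤ F n := fun n =>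
      tv_lower Mk χk Sk N hN3 hMnn hMsum hχ1 hmean hdet hgap i₀ j₀ hij n
    have hL : 1 - 2/(16*(N:ℝ)) ≤ ⨅ n, F n := le_ciInf hlow
    have hLpos : 0 < ⨅ n, F n := by
      have h1 : 2/(16*(N:ℝ)) < 1 := by
        rw [div_lt_one (by positivity)]
        linarith
      linarith
    exact ⟨⨅ n, F n, hLpos, htend⟩
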